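/- Let D be a 0–1 dataset with M rows satisfying the constraint system of the Hamiltonian-cycle reduction for a graph G on Fin M, and let σ be its induced cyclic ordering (σ(i) = the unique j such that some row contains a 1 in both o_i and v_j). If P = {j,k} is a non-edge of G, then there is no i ∈ Fin M with {σ(i), σ(i+1 mod M)} = {j,k}; that is, the columns b_i and c_P are never equal as 0–1 vectors, so every cyclically consecutive pair of the induced ordering is an edge of G. -/

import Mathlib

/-- The columns of the Hamiltonian-cycle reduction constraint system for a graph
`G` on `Fin M`: groups `O`, `V`, `B` indexed by `Fin M`, group `C` indexed by
unordered pairs of distinct vertices, and groups `S`, `E` indexed by pairs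
`(i, P)` with `i ∈ Fin M` and `P` a non-edge of `G`. -/
inductive Col (M : ℕ) (G : SimpleGraph (Fin M)) : Type where
  | o : Fin M → Col M G
  | v : Fin M → Col M G
  | b : Fin M → Col M G
  | c : {P : Sym2 (Fin M) // ¬ P.IsDiag} → Col M G
  | s : Fin M → {P : Sym2 (Fin M) // ¬ P.IsDiag ∧ P ∉ G.edgeSet} → Col M G
  | e : Fin M → {P : Sym2 (Fin M) // ¬ P.IsDiag ∧ P ∉ G.edgeSet} → Col M G

/-- The frequency of the singleton itemset `{x}` in the dataset `D`:
the number of rows having a 1 in column `x`. -/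
noncomputable def fr1 {M : ℕ} {α : Type*} (D : Fin M → α → Bool) (x : α) : ℕ :=
  Nat.card {t : Fin M // D t x = true}

/-- The frequency of the two-element itemset `{x, y}` in the dataset `D`:
the number of rows having a 1 in both columns `x` and `y`. -/
noncomputable def fr2 {M : ℕ} {α : Type*} (D : Fin M → α → Bool) (x y : α) : ℕ :=
  Nat.card {t : Fin M // D t x = true ∧ D t y = true}

/-- A 0–1 dataset `D` with `M` rows satisfies the itemset frequency constraints of
the Hamiltonian-cycle reduction for `G` (indices of the `b` columns taken mod `M`). -/
def Satisfies (M : ℕ) [NeZero M] (G : SimpleGraph (Fin M)) (D : Fin M → Col M G → Bool) : Prop :=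
  (∀ i, fr1 D (Col.o i) = 1) ∧
  (∀ i j, i ≠ j → fr2 D (Col.o i) (Col.o j) = 0) ∧
  (∀ i, fr1 D (Col.v i) = 1) ∧
  (∀ i j, i ≠ j → fr2 D (Col.v i) (Col.v j) = 0) ∧
  (∀ i, fr1 D (Col.b i) = 2) ∧
  (∀ i, fr2 D (Col.b i) (Col.o i) = 1) ∧
  (∀ i, fr2 D (Col.b i) (Col.o (i + 1)) = 1) ∧
  (∀ P, fr1 D (Col.c P) = 2) ∧
  (∀ (P : {P : Sym2 (Fin M) // ¬ P.IsDiag}) (j : Fin M),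
      j ∈ P.val → fr2 D (Col.c P) (Col.v j) = 1) ∧
  (∀ i P, fr1 D (Col.s i P) = 1) ∧
  (∀ i P, fr2 D (Col.s i P) (Col.b i) = 1) ∧
  (∀ (i : Fin M) (P : {P : Sym2 (Fin M) // ¬ P.IsDiag ∧ P ∉ G.edgeSet}),
      fr2 D (Col.s i P) (Col.c ⟨P.val, P.prop.1⟩) = 0) ∧
  (∀ i P, fr1 D (Col.e i P) = M - 1) ∧
  (∀ i P, fr2 D (Col.s i P) (Col.e i P) = 0)

section Helpers

variable {M : ℕ} {α : Type*} (D : Fin M → α → Bool)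

lemma fr1_eq (x : α) :
    fr1 D x = (Finset.univ.filter fun t => D t x = true).card := by
  rw [fr1, Nat.card_eq_fintype_card, Fintype.card_subtype]

lemma fr2_eq (x y : α) :
    fr2 D x y = (Finset.univ.filter fun t => D t x = true ∧ D t y = true).card := by
  rw [fr2, Nat.card_eq_fintype_card, Fintype.card_subtype]

lemma fr1_le (x : α) : fr1 D x ≤ M := by
  rw [fr1_eq]
  simpa using Finset.card_filter_le Finset.univ (fun t => D t x = true)

lemma fr1_unique {x : α} (h : fr1 D x = 1) {t t' : Fin M}
    (ht : D t x = true) (ht' : D t' x = true) : t = t' := by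
  rw [fr1_eq] at h
  exact Finset.card_le_one.mp h.le t (by simpa) t' (by simpa)

lemma fr2_one_exists {x y : α} (h : fr2 D x y = 1) :
    ∃ t, D t x = true ∧ D t y = true := by
  rw [fr2_eq] at h
  obtain ⟨t, ht⟩ := Finset.card_pos.mp (by omega : 0 < (Finset.univ.filter fun t => D t x = true ∧ D t y = true).card)
  exact ⟨t, by simpa using ht⟩

lemma fr2_zero {x y : α} (h : fr2 D x y = 0) {t : Fin M}
    (hx : D t x = true) (hy : D t y = true) : False := by
  rw [fr2_eq, Finset.card_eq_zero] at h
  have ht : t ∈ Finset.univ.filter fun t => D t x = true ∧ D t y = true := by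
    simp [hx, hy]
  rw [h] at ht
  simp at ht

lemma fr1_two {x : α} (h : fr1 D x = 2) {a b : Fin M} (hab : a ≠ b)
    (ha : D a x = true) (hb : D b x = true) (t : Fin M) :
    D t x = true ↔ t = a ∨ t = b := by
  rw [fr1_eq] at h
  have hsub : ({a, b} : Finset (Fin M)) ⊆ Finset.univ.filter fun t => D t x = true := by
    intro u hu
    simp only [Finset.mem_insert, Finset.mem_singleton] at hu
    rcases hu with rfl | rfl <;> simp [ha, hb]
  have hcard : (Finset.univ.filter fun t => D t x = true).card
      ≤ ({a, b} : Finset (Fin M)).card := by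
    rw [h, Finset.card_insert_of_notMem (by simpa), Finset.card_singleton]
  have heq := Finset.eq_of_subset_of_card_le hsub hcard
  constructor
  · intro ht
    have : t ∈ ({a, b} : Finset (Fin M)) := by
      rw [heq]; simp [ht]
    simpa using this
  · rintro (rfl | rfl) <;> assumption

end Helpers

/-- If `D` satisfies the constraints of the Hamiltonian-cycle
reduction for `G` and `σ` is its induced cyclic ordering, then no non-edge
`{j,k}` of `G` ever occurs as a cyclically consecutive pair `{σ i, σ (i+1)}`;
equivalently, the columns `b_i` and `c_P` are never equal as 0–1 vectors for a
non-edge `P`, so every cyclically consecutive pair of the induced ordering is an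
edge of `G`. -/
theorem no_nonedge_is_consecutive (M : ℕ) [NeZero M]
    (G : SimpleGraph (Fin M)) (D : Fin M → Col M G → Bool)
    (hD : Satisfies M G D) (σ : Fin M → Fin M)
    (hσ : ∀ i : Fin M, ∃ t : Fin M, D t (Col.o i) = true ∧ D t (Col.v (σ i)) = true) :
    (∀ j k : Fin M, j ≠ k → ¬ G.Adj j k →
      ¬ ∃ i : Fin M, ({σ i, σ (i + 1)} : Set (Fin M)) = {j, k}) ∧
    (∀ (i : Fin M) (P : {P : Sym2 (Fin M) // ¬ P.IsDiag ∧ P ∉ G.edgeSet}),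
      (fun t : Fin M => D t (Col.b i)) ≠ (fun t : Fin M => D t (Col.c ⟨P.val, P.prop.1⟩))) ∧
    (∀ i : Fin M, G.Adj (σ i) (σ (i + 1))) := by
  obtain ⟨ho1, ho2, hv1, hv2, hb1, hbo, hbo', hc1, hcv, hs1, hsb, hsc, he1, hse⟩ := hD
  -- M ≥ 2
  have hM2 : 2 ≤ M := by
    have := fr1_le D (Col.b 0)
    rw [hb1 0] at this
    exact this
  have hne_succ : ∀ i : Fin M, i ≠ i + 1 := by
    intro i h
    have h0 : (0 : Fin M) = 1 := by
      have := congrArg (fun x => x - i) h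
      simpa using this
    have h1 : (0 : ℕ) = (1 : Fin M).val := congrArg Fin.val h0
    rw [Fin.val_one'] at h1
    rw [Nat.mod_eq_of_lt (by omega)] at h1
    omega
  have hσinj : Function.Injective σ := by
    intro i i' h
    obtain ⟨t, hto, htv⟩ := hσ i
    obtain ⟨t', hto', htv'⟩ := hσ i'
    have htt : t = t' := fr1_unique D (hv1 (σ i)) htv (h ▸ htv')
    by_contra hii
    exact fr2_zero D (ho2 i i' hii) hto (htt ▸ hto')
  -- Part 2: b_i ≠ c_P
  have part2 : ∀ (i : Fin M) (P : {P : Sym2 (Fin M) // ¬ P.IsDiag ∧ P ∉ G.edgeSet}),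
      (fun t : Fin M => D t (Col.b i)) ≠ (fun t : Fin M => D t (Col.c ⟨P.val, P.prop.1⟩)) := by
    intro i P heq
    obtain ⟨t, hts, htb⟩ := fr2_one_exists D (hsb i P)
    have htc : D t (Col.c ⟨P.val, P.prop.1⟩) = true := by
      have := congrFun heq t
      rw [← this]
      exact htb
    exact fr2_zero D (hsc i P) hts htc
  -- Part 1
  have part1 : ∀ j k : Fin M, j ≠ k → ¬ G.Adj j k →
      ¬ ∃ i : Fin M, ({σ i, σ (i + 1)} : Set (Fin M)) = {j, k} := by
    rintro j k hjk hadj ⟨i, hset⟩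
    have hPd : ¬ (s(j, k) : Sym2 (Fin M)).IsDiag := by
      simpa using hjk
    have hPe : (s(j, k) : Sym2 (Fin M)) ∉ G.edgeSet := by
      simpa using hadj
    set P : {P : Sym2 (Fin M) // ¬ P.IsDiag ∧ P ∉ G.edgeSet} := ⟨s(j, k), hPd, hPe⟩ with hP
    obtain ⟨t1, ht1o, ht1v⟩ := hσ i
    obtain ⟨t2, ht2o, ht2v⟩ := hσ (i + 1)
    have ht12 : t1 ≠ t2 := by
      intro h
      exact fr2_zero D (ho2 i (i + 1) (hne_succ i)) ht1o (h ▸ ht2o)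
    have hb_t1 : D t1 (Col.b i) = true := by
      obtain ⟨u, hub, huo⟩ := fr2_one_exists D (hbo i)
      have : u = t1 := fr1_unique D (ho1 i) huo ht1o
      exact this ▸ hub
    have hb_t2 : D t2 (Col.b i) = true := by
      obtain ⟨u, hub, huo⟩ := fr2_one_exists D (hbo' i)
      have : u = t2 := fr1_unique D (ho1 (i + 1)) huo ht2o
      exact this ▸ hub
    have hσi_mem : σ i = j ∨ σ i = k := by
      have : σ i ∈ ({j, k} : Set (Fin M)) := by
        rw [← hset]; left; rfl
      simpa using this
    have hσi1_mem : σ (i + 1) = j ∨ σ (i + 1) = k := by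
      have : σ (i + 1) ∈ ({j, k} : Set (Fin M)) := by
        rw [← hset]; right; rfl
      simpa using this
    have hc_row : ∀ (x t' : Fin M), (x = j ∨ x = k) → D t' (Col.v x) = true →
        D t' (Col.c ⟨P.val, P.prop.1⟩) = true := by
      intro x t' hx htv'
      have hxmem : x ∈ P.val := by
        rw [hP]
        rcases hx with rfl | rfl
        · exact Sym2.mem_mk_left x k
        · exact Sym2.mem_mk_right j x
      obtain ⟨u, huc, huv⟩ := fr2_one_exists D (hcv ⟨P.val, P.prop.1⟩ x hxmem)
      have : u = t' := fr1_unique D (hv1 x) huv htv'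
      exact this ▸ huc
    have hc_t1 : D t1 (Col.c ⟨P.val, P.prop.1⟩) = true := hc_row (σ i) t1 hσi_mem ht1v
    have hc_t2 : D t2 (Col.c ⟨P.val, P.prop.1⟩) = true := hc_row (σ (i + 1)) t2 hσi1_mem ht2v
    apply part2 i P
    funext t
    have h1 := fr1_two D (hb1 i) ht12 hb_t1 hb_t2 t
    have h2 := fr1_two D (hc1 ⟨P.val, P.prop.1⟩) ht12 hc_t1 hc_t2 t
    have : D t (Col.b i) = true ↔ D t (Col.c ⟨P.val, P.prop.1⟩) = true := h1.trans h2.symm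
    cases hb : D t (Col.b i) <;> cases hc : D t (Col.c ⟨P.val, P.prop.1⟩) <;> simp_all
  refine ⟨part1, part2, ?_⟩
  intro i
  by_contra hadj
  have hne : σ i ≠ σ (i + 1) := fun h => hne_succ i (hσinj h)
  exact part1 (σ i) (σ (i + 1)) hne hadj ⟨i, rfl⟩
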